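/- Let λ, λ₃ ∈ ℝ with λ ≠ 0 and λ₃ ≠ 0, and suppose f(u) = A + c₂ u^{λ₃/λ} on an interval of positive reals with c₂ ≠ 0 and λ₃/λ ∉ {0,1} (so f'' is nowhere zero). Then the equation f'''(u)/(f''(u))² = 2λu cannot hold for all u in a nontrivial interval. -/
import Mathlib

private lemma aux_deriv13 {I : Set ℝ} (hIopen : IsOpen I) (hI : I ⊆ Set.Ioi (0:ℝ))
    {g : ℝ → ℝ} {c p : ℝ} (hg : ∀ x ∈ I, g x = c * x ^ p) :
    ∀ u ∈ I, deriv g u = c * p * u ^ (p - 1) := by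
  intro u hu
  have h1 : g =ᶠ[nhds u] fun x => c * x ^ p :=
    Filter.eventuallyEq_of_mem (hIopen.mem_nhds hu) hg
  rw [h1.deriv_eq]
  have h2 := ((Real.hasDerivAt_rpow_const (x := u) (p := p)
    (Or.inl (ne_of_gt (Set.mem_Ioi.mp (hI hu))))).const_mul c).deriv
  rw [h2]; ring

theorem stmt13 (f : ℝ → ℝ) (lam lam₃ A c₂ : ℝ) (hlam : lam ≠ 0) (hlam₃ : lam₃ ≠ 0)
    (hc₂ : c₂ ≠ 0) (hk0 : lam₃ / lam ≠ 0) (hk1 : lam₃ / lam ≠ 1)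
    (I : Set ℝ) (hIopen : IsOpen I) (hIne : I.Nonempty) (hI : I ⊆ Set.Ioi (0 : ℝ))
    (hf : ∀ u ∈ I, f u = A + c₂ * u ^ (lam₃ / lam)) :
    ¬ (∀ u ∈ I, iteratedDeriv 3 f u / (iteratedDeriv 2 f u) ^ 2 = 2 * lam * u) := by
  intro hE
  set k := lam₃ / lam with hk
  have hk1' : k - 1 ≠ 0 := sub_ne_zero.mpr hk1
  have hD : c₂ * k * (k - 1) ≠ 0 := mul_ne_zero (mul_ne_zero hc₂ hk0) hk1'
  -- first derivative
  have hd1 : ∀ u ∈ I, deriv f u = c₂ * k * u ^ (k - 1) := by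
    intro u hu
    have h1 : f =ᶠ[nhds u] fun x => A + c₂ * x ^ k :=
      Filter.eventuallyEq_of_mem (hIopen.mem_nhds hu) hf
    rw [h1.deriv_eq]
    have h2 := (((Real.hasDerivAt_rpow_const (x := u) (p := k)
      (Or.inl (ne_of_gt (Set.mem_Ioi.mp (hI hu))))).const_mul c₂).const_add A).deriv
    rw [h2]; ring
  have hd2 : ∀ u ∈ I, deriv (deriv f) u = c₂ * k * (k - 1) * u ^ (k - 1 - 1) := by
    intro u hu
    rw [aux_deriv13 hIopen hI hd1 u hu]
  have hd3 : ∀ u ∈ I, deriv (deriv (deriv f)) u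
      = c₂ * k * (k - 1) * (k - 2) * u ^ (k - 3) := by
    intro u hu
    rw [aux_deriv13 hIopen hI hd2 u hu, show k - 1 - 1 - 1 = k - 3 by ring]; ring
  -- the key pointwise identity derived from the equation
  have key : ∀ u ∈ I, (k - 2) * u ^ (-k) = 2 * lam * c₂ * k * (k - 1) := by
    intro u hu
    have hu0 : (0:ℝ) < u := Set.mem_Ioi.mp (hI hu)
    have hi2 : iteratedDeriv 2 f u = c₂ * k * (k - 1) * u ^ (k - 1 - 1) := by
      rw [show (2:ℕ) = 1 + 1 from rfl, iteratedDeriv_succ, iteratedDeriv_one]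
      exact hd2 u hu
    have hi3 : iteratedDeriv 3 f u = c₂ * k * (k - 1) * (k - 2) * u ^ (k - 3) := by
      rw [show (3:ℕ) = 1 + 1 + 1 from rfl, iteratedDeriv_succ, iteratedDeriv_succ,
        iteratedDeriv_one]
      exact hd3 u hu
    have hEu := hE u hu
    rw [hi2, hi3] at hEu
    have hden : c₂ * k * (k - 1) * u ^ (k - 1 - 1) ≠ 0 :=
      mul_ne_zero hD (Real.rpow_pos_of_pos hu0 _).ne'
    have hEu' := (div_eq_iff (pow_ne_zero 2 hden)).mp hEu
    have e1 : u ^ (k - 3) = u ^ (-k) * u ^ (2 * k - 3) := by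
      rw [← Real.rpow_add hu0]; ring_nf
    have e2 : u * (u ^ (k - 1 - 1) * u ^ (k - 1 - 1)) = u ^ (2 * k - 3) := by
      nth_rewrite 1 [← Real.rpow_one u]
      rw [← Real.rpow_add hu0, ← Real.rpow_add hu0]
      ring_nf
    have ht : u ^ (2 * k - 3) ≠ 0 := (Real.rpow_pos_of_pos hu0 _).ne'
    have h4 : (c₂ * k * (k - 1)) * (((k - 2) * u ^ (-k)) * u ^ (2 * k - 3))
        = (c₂ * k * (k - 1)) * ((2 * lam * c₂ * k * (k - 1)) * u ^ (2 * k - 3)) := by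
      linear_combination hEu' - (c₂ * k * (k - 1) * (k - 2)) * e1
        + (2 * lam * (c₂ * k * (k - 1))^2) * e2
    exact mul_right_cancel₀ ht (mul_left_cancel₀ hD h4)
  -- pick two distinct points in I
  obtain ⟨x, hx⟩ := hIne
  obtain ⟨ε, hε, hball⟩ := Metric.isOpen_iff.mp hIopen x hx
  have hx2 : x + ε / 2 ∈ I := by
    apply hball
    simp only [Metric.mem_ball, Real.dist_eq, add_sub_cancel_left]
    rw [abs_of_pos (by linarith)]
    linarith
  have hxpos : (0:ℝ) < x := Set.mem_Ioi.mp (hI hx)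
  have hx2pos : (0:ℝ) < x + ε / 2 := Set.mem_Ioi.mp (hI hx2)
  have k1 := key x hx
  have k2 := key (x + ε / 2) hx2
  have hD' : 2 * lam * c₂ * k * (k - 1) ≠ 0 :=
    mul_ne_zero (mul_ne_zero (mul_ne_zero (mul_ne_zero two_ne_zero hlam) hc₂) hk0) hk1'
  have hk2 : k - 2 ≠ 0 := by
    intro h
    rw [h, zero_mul] at k1
    exact hD' k1.symm
  have hXX : x ^ (-k) = (x + ε / 2) ^ (-k) :=
    mul_left_cancel₀ hk2 (k1.trans k2.symm)
  have hlog : Real.log x = Real.log (x + ε / 2) := by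
    have h := congrArg Real.log hXX
    rw [Real.log_rpow hxpos, Real.log_rpow hx2pos] at h
    exact mul_left_cancel₀ (neg_ne_zero.mpr hk0) h
  have hxx : x = x + ε / 2 := by
    have h := congrArg Real.exp hlog
    rwa [Real.exp_log hxpos, Real.exp_log hx2pos] at h
  linarith
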